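/- If G is an oriented graph on n ≥ 5 vertices with minimum semidegree δ⁰(G) ≥ ⌊n/3⌋ + 1, then for every vertex x of G, G contains a 5-cycle through x. -/

import Mathlib

/-- An oriented graph: a digraph (relation) with no loops and no pair of
antiparallel edges. -/
def IsOrientedGraph {V : Type*} (E : V → V → Prop) : Prop :=
  ∀ x y, E x y → ¬ E y x

/-- The outdegree `d⁺(x)` of a vertex. -/
noncomputable def outDeg {V : Type*} (E : V → V → Prop) (x : V) : ℕ :=
  Nat.card {y // E x y}

/-- The indegree `d⁻(x)` of a vertex. -/
noncomputable def inDeg {V : Type*} (E : V → V → Prop) (x : V) : ℕ :=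
  Nat.card {y // E y x}

/-- The minimum semidegree `δ⁰(G) = min over x of min (d⁺(x), d⁻(x))`. -/
noncomputable def minSemidegree {V : Type*} (E : V → V → Prop) : ℕ :=
  sInf (Set.range fun x => min (outDeg E x) (inDeg E x))

/-- The minimum outdegree `δ⁺(G)`. -/
noncomputable def minOutdegree {V : Type*} (E : V → V → Prop) : ℕ :=
  sInf (Set.range fun x => outDeg E x)

/-- `G` contains a directed cycle of length `ℓ`: distinct vertices
`v₀, …, v_{ℓ-1}` (indexed cyclically) with all consecutive edges present. -/
def HasCycle {V : Type*} (E : V → V → Prop) (ℓ : ℕ) : Prop :=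
  ∃ v : ZMod ℓ → V, Function.Injective v ∧ ∀ i, E (v i) (v (i + 1))

/-- `G` contains a directed `ℓ`-cycle through the vertex `u`. -/
def HasCycleThrough {V : Type*} (E : V → V → Prop) (ℓ : ℕ) (u : V) : Prop :=
  ∃ v : ZMod ℓ → V, Function.Injective v ∧ (∀ i, E (v i) (v (i + 1))) ∧ ∃ i, v i = u

open Finset

/-- A closed walk of length 5 through `x` in an oriented graph is automatically a
5-cycle through `x`. -/
lemma olemma_cycle {V : Type*} {E : V → V → Prop} (hG : IsOrientedGraph E) {x a b c s : V}
    (e1 : E x a) (e2 : E a b) (e3 : E b c) (e4 : E c s) (e5 : E s x) :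
    HasCycleThrough E 5 x := by
  have nxa : x ≠ a := by rintro rfl; exact hG x x e1 e1
  have nxb : x ≠ b := by rintro rfl; exact hG a x e2 e1
  have nxc : x ≠ c := by rintro rfl; exact hG s x e5 e4
  have nxs : x ≠ s := by rintro rfl; exact hG x x e5 e5
  have nab : a ≠ b := by rintro rfl; exact hG a a e2 e2
  have nac : a ≠ c := by rintro rfl; exact hG b a e3 e2
  have nas : a ≠ s := by rintro rfl; exact hG x a e1 e5
  have nbc : b ≠ c := by rintro rfl; exact hG b b e3 e3
  have nbs : b ≠ s := by rintro rfl; exact hG c b e4 e3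
  have ncs : c ≠ s := by rintro rfl; exact hG c c e4 e4
  refine ⟨![x, a, b, c, s], ?_, ?_, ⟨0, rfl⟩⟩
  · intro i j hij
    fin_cases i <;> fin_cases j <;> simp_all <;> rfl
  · intro i
    fin_cases i <;> simpa using by assumption

/-- Double counting in an oriented graph: if every vertex of `X` has at least
`d - c` out-neighbours inside `X`, then `X` has more than `2(d-c)` vertices. -/
lemma olemma_density {V : Type*} [DecidableEq V] (R : V → V → Prop) [DecidableRel R]
    (hR : ∀ a b, R a b → ¬ R b a) (X : Finset V) (d c : ℕ)
    (h : ∀ a ∈ X, d ≤ (X.filter (fun b => R a b)).card + c) (hne : X.Nonempty) :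
    2 * d + 1 ≤ X.card + 2 * c := by
  classical
  set T : Finset (V × V) := (X ×ˢ X).filter (fun p => R p.1 p.2) with hT
  have hTeq : T = X.biUnion (fun a => (X.filter (fun b => R a b)).image (fun b => (a, b))) := by
    ext p
    simp only [hT, mem_filter, mem_product, mem_biUnion, mem_image]
    constructor
    · rintro ⟨⟨h1, h2⟩, h3⟩
      exact ⟨p.1, h1, p.2, ⟨h2, h3⟩, rfl⟩
    · rintro ⟨a, ha, b, ⟨hb, hab⟩, rfl⟩
      exact ⟨⟨ha, hb⟩, hab⟩
  have hTcard : T.card = ∑ a ∈ X, (X.filter (fun b => R a b)).card := by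
    rw [hTeq, card_biUnion]
    · refine Finset.sum_congr rfl (fun a _ => ?_)
      exact card_image_of_injective _ (fun b1 b2 hb => by simpa using hb)
    · intro u hu v hv huv
      simp only [disjoint_left, mem_image]
      rintro ⟨a1, b1⟩ ⟨c1, hc1, hc2⟩ ⟨d1, hd1, hd2⟩
      rw [Prod.mk.injEq] at hc2 hd2
      exact huv (hc2.1.trans hd2.1.symm)
  have h1 : X.card * d ≤ T.card + X.card * c := by
    calc X.card * d = ∑ _a ∈ X, d := by rw [Finset.sum_const, smul_eq_mul, mul_comm]
    _ ≤ ∑ a ∈ X, ((X.filter (fun b => R a b)).card + c) := Finset.sum_le_sum h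
    _ = T.card + X.card * c := by
        rw [Finset.sum_add_distrib, hTcard, Finset.sum_const, smul_eq_mul, mul_comm]
  have hswap : Disjoint T (T.image Prod.swap) := by
    simp only [disjoint_left, mem_image]
    rintro ⟨p1, p2⟩ hp ⟨⟨q1, q2⟩, hq, hqe⟩
    rw [hT, mem_filter] at hp hq
    have : (q2, q1) = (p1, p2) := by simpa [Prod.swap] using hqe
    rw [Prod.mk.injEq] at this
    exact hR p1 p2 hp.2 (by rw [← this.1, ← this.2]; exact hq.2)
  have hsub : T ∪ T.image Prod.swap ⊆ X.offDiag := by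
    intro p hp
    rw [mem_union] at hp
    rw [Finset.mem_offDiag]
    rcases hp with hp | hp
    · rw [hT, mem_filter, mem_product] at hp
      refine ⟨hp.1.1, hp.1.2, ?_⟩
      intro h'
      exact hR _ _ hp.2 (h' ▸ hp.2)
    · rw [mem_image] at hp
      obtain ⟨q, hq, rfl⟩ := hp
      rw [hT, mem_filter, mem_product] at hq
      refine ⟨hq.1.2, hq.1.1, ?_⟩
      intro h'
      simp only [Prod.fst_swap, Prod.snd_swap] at h'
      exact hR _ _ hq.2 (h' ▸ hq.2)
  have h2 : 2 * T.card ≤ X.offDiag.card := by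
    have := card_le_card hsub
    rw [card_union_of_disjoint hswap, card_image_of_injective _ Prod.swap_injective] at this
    omega
  have hoff : X.offDiag.card + X.card = X.card * X.card := by
    have hdu := Finset.diag_union_offDiag X
    have hdd := Finset.disjoint_diag_offDiag X
    have := card_union_of_disjoint hdd
    rw [hdu, card_product, Finset.diag_card] at this
    omega
  have hN : 1 ≤ X.card := hne.card_pos
  have key : X.card * (2 * d + 1) ≤ X.card * (X.card + 2 * c) := by nlinarith [h1, h2, hoff]
  exact Nat.le_of_mul_le_mul_left key hN

theorem five_cycle_through_every_vertex (V : Type*) [Fintype V] (E : V → V → Prop)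
    (hG : IsOrientedGraph E) (hn : 5 ≤ Fintype.card V)
    (hδ : Fintype.card V / 3 + 1 ≤ minSemidegree E) :
    ∀ x : V, HasCycleThrough E 5 x := by
  intro x
  classical
  haveI : DecidableRel E := Classical.decRel E
  haveI : DecidableEq V := Classical.decEq V
  set d : ℕ := Fintype.card V / 3 + 1 with hd'
  have hnd : Fintype.card V + 1 ≤ 3 * d := by omega
  have hd1 : 1 ≤ d := by omega
  have degOut : ∀ v : V, d ≤ (univ.filter (fun y => E v y)).card := by
    intro v
    have h1 : minSemidegree E ≤ outDeg E v :=
      le_trans (Nat.sInf_le ⟨v, rfl⟩) (min_le_left _ _)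
    have h2 : outDeg E v = (univ.filter (fun y => E v y)).card := by
      rw [outDeg, Nat.card_eq_fintype_card, Fintype.card_subtype]
    exact h2 ▸ le_trans hδ h1
  have degIn : ∀ v : V, d ≤ (univ.filter (fun y => E y v)).card := by
    intro v
    have h1 : minSemidegree E ≤ inDeg E v :=
      le_trans (Nat.sInf_le ⟨v, rfl⟩) (min_le_right _ _)
    have h2 : inDeg E v = (univ.filter (fun y => E y v)).card := by
      rw [inDeg, Nat.card_eq_fintype_card, Fintype.card_subtype]
    exact h2 ▸ le_trans hδ h1
  set A : Finset V := univ.filter (fun v => E x v) with hA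
  set B : Finset V := univ.filter (fun v => E v x) with hB
  have hmemA : ∀ v, v ∈ A ↔ E x v := by intro v; simp [hA]
  have hmemB : ∀ v, v ∈ B ↔ E v x := by intro v; simp [hB]
  have hABd : Disjoint A B := by
    rw [disjoint_left]
    intro u huA huB
    exact hG x u ((hmemA u).mp huA) ((hmemB u).mp huB)
  have hAcard : d ≤ A.card := degOut x
  have hBcard : d ≤ B.card := degIn x
  have hxA : x ∉ A := fun h => hG x x ((hmemA x).mp h) ((hmemA x).mp h)
  have hxB : x ∉ B := fun h => hG x x ((hmemB x).mp h) ((hmemB x).mp h)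
  suffices hW : ∃ a ∈ A, ∃ s ∈ B, ∃ b c, E a b ∧ E b c ∧ E c s by
    obtain ⟨a, ha, s, hs, b, c, e2, e3, e4⟩ := hW
    exact olemma_cycle hG ((hmemA a).mp ha) e2 e3 e4 ((hmemB s).mp hs)
  by_contra h3w
  push_neg at h3w
  -- h3w : ∀ a ∈ A, ∀ s ∈ B, ∀ b c, E a b → E b c → ¬ E c s
  set D1 : Finset V := univ.filter (fun v => ∃ a ∈ A, E a v) with hD1
  set W : Finset V := univ.filter (fun v => ∃ s ∈ B, E v s) with hWd
  have hmemD1 : ∀ v, v ∈ D1 ↔ ∃ a ∈ A, E a v := by intro v; simp [hD1]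
  have hmemW : ∀ v, v ∈ W ↔ ∃ s ∈ B, E v s := by intro v; simp [hWd]
  have hKey : ∀ q ∈ D1, ∀ w ∈ W, ¬ E q w := by
    intro q hq w hw hqw
    obtain ⟨a, ha, haq⟩ := (hmemD1 q).mp hq
    obtain ⟨s, hs, hws⟩ := (hmemW w).mp hw
    exact h3w a ha s hs q w haq hqw hws
  have hAne : A.Nonempty := card_pos.mp (lt_of_lt_of_le zero_lt_one (le_trans hd1 hAcard))
  have hBne : B.Nonempty := card_pos.mp (lt_of_lt_of_le zero_lt_one (le_trans hd1 hBcard))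
  have hD1card : d ≤ D1.card := by
    obtain ⟨a0, ha0⟩ := hAne
    refine le_trans (degOut a0) (card_le_card ?_)
    intro v hv
    exact (hmemD1 v).mpr ⟨a0, ha0, (mem_filter.mp hv).2⟩
  have hWcard : d ≤ W.card := by
    obtain ⟨s0, hs0⟩ := hBne
    refine le_trans (degIn s0) (card_le_card ?_)
    intro v hv
    exact (hmemW v).mpr ⟨s0, hs0, (mem_filter.mp hv).2⟩
  have hxD1 : x ∉ D1 := by
    intro h
    obtain ⟨a, ha, hax⟩ := (hmemD1 x).mp h
    exact hG x a ((hmemA a).mp ha) hax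
  have hxW : x ∉ W := by
    intro h
    obtain ⟨s, hs, hxs⟩ := (hmemW x).mp h
    exact hG s x ((hmemB s).mp hs) hxs
  have htri : ∀ S1 S2 S3 : Finset V, d ≤ S1.card → d ≤ S2.card → d ≤ S3.card →
      Disjoint S1 S2 → Disjoint S1 S3 → Disjoint S2 S3 → False := by
    intro S1 S2 S3 c1 c2 c3 d12 d13 d23
    have h1 : (S1 ∪ S2 ∪ S3).card ≤ Fintype.card V := by
      rw [← card_univ]
      exact card_le_card (subset_univ _)
    rw [card_union_of_disjoint (disjoint_union_left.mpr ⟨d13, d23⟩),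
      card_union_of_disjoint d12] at h1
    omega
  have hengOut : ∀ v : V, ∃ u, E v u ∧ (u ∈ A ∨ u ∈ B) := by
    intro v
    by_contra hcon
    push_neg at hcon
    refine htri A B (univ.filter (fun y => E v y)) hAcard hBcard (degOut v) hABd ?_ ?_ <;>
      · rw [disjoint_right]
        intro u hu huAB
        have := hcon u (mem_filter.mp hu).2
        tauto
  have hengIn : ∀ v : V, ∃ u, E u v ∧ (u ∈ A ∨ u ∈ B) := by
    intro v
    by_contra hcon
    push_neg at hcon
    refine htri A B (univ.filter (fun y => E y v)) hAcard hBcard (degIn v) hABd ?_ ?_ <;>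
      · rw [disjoint_right]
        intro u hu huAB
        have := hcon u (mem_filter.mp hu).2
        tauto
  -- cells
  set P : Finset V := D1 \ W with hP
  set K : Finset V := D1 ∩ W with hK
  set Q : Finset V := W \ D1 with hQ
  set AP : Finset V := A ∩ P with hAP'
  set AK : Finset V := A ∩ K with hAK'
  set AQ : Finset V := A ∩ Q with hAQ'
  set BP : Finset V := B ∩ P with hBP'
  set BK : Finset V := B ∩ K with hBK'
  set BQ : Finset V := B ∩ Q with hBQ'
  set OP : Finset V := (P \ A) \ B with hOP'
  set OK : Finset V := (K \ A) \ B with hOK'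
  set OQ : Finset V := (Q \ A) \ B with hOQ'
  have hsum2 : ∀ S T U : Finset V, Disjoint T U → T ⊆ S → U ⊆ S → T.card + U.card ≤ S.card := by
    intro S T U hd hT hU
    rw [← card_union_of_disjoint hd]
    exact card_le_card (union_subset hT hU)
  -- basic membership helpers
  have hPmem : ∀ v, v ∈ P ↔ v ∈ D1 ∧ v ∉ W := fun v => mem_sdiff
  have hQmem : ∀ v, v ∈ Q ↔ v ∈ W ∧ v ∉ D1 := fun v => mem_sdiff
  have hnotW : ∀ v, v ∉ W → ∀ u ∈ B, ¬ E v u := by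
    intro v hv u hu hE
    exact hv ((hmemW v).mpr ⟨u, hu, hE⟩)
  have hnotD1 : ∀ v, v ∉ D1 → ∀ u ∈ A, ¬ E u v := by
    intro v hv u hu hE
    exact hv ((hmemD1 v).mpr ⟨u, hu, hE⟩)

  have hPQd : Disjoint P Q := by
    rw [disjoint_left]; intro u hu h2; exact (mem_sdiff.mp hu).2 (mem_sdiff.mp h2).1
  have hPKd : Disjoint P K := by
    rw [disjoint_left]; intro u hu h2; exact (mem_sdiff.mp hu).2 (mem_inter.mp h2).2
  have hKQd : Disjoint K Q := by
    rw [disjoint_left]; intro u hu h2; exact (mem_sdiff.mp h2).2 (mem_inter.mp hu).1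
  have hOPP : OP ⊆ P := fun u hu => (mem_sdiff.mp (mem_sdiff.mp hu).1).1
  have hOKK : OK ⊆ K := fun u hu => (mem_sdiff.mp (mem_sdiff.mp hu).1).1
  have hOQQ : OQ ⊆ Q := fun u hu => (mem_sdiff.mp (mem_sdiff.mp hu).1).1
  have hxP : x ∉ P := fun h => hxD1 (mem_sdiff.mp h).1
  have hxK : x ∉ K := fun h => hxD1 (mem_inter.mp h).1
  have hxQ : x ∉ Q := fun h => hxW (mem_sdiff.mp h).1
  -- S1 : A.card + B.card + OP.card + OK.card + OQ.card + 1 ≤ n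
  have hS1 : A.card + B.card + OP.card + OK.card + OQ.card + 1 ≤ Fintype.card V := by
    have d1 : Disjoint (A ∪ B) OP := by
      rw [disjoint_right]
      intro u hu huAB
      rcases mem_union.mp huAB with h | h
      · exact (mem_sdiff.mp (mem_sdiff.mp hu).1).2 h
      · exact (mem_sdiff.mp hu).2 h
    have d2 : Disjoint (A ∪ B ∪ OP) OK := by
      rw [disjoint_right]
      intro u hu huu
      rcases mem_union.mp huu with h | h
      · rcases mem_union.mp h with h' | h'
        · exact (mem_sdiff.mp (mem_sdiff.mp hu).1).2 h'
        · exact (mem_sdiff.mp hu).2 h'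
      · exact (disjoint_left.mp hPKd) (hOPP h) (hOKK hu)
    have d3 : Disjoint (A ∪ B ∪ OP ∪ OK) OQ := by
      rw [disjoint_right]
      intro u hu huu
      rcases mem_union.mp huu with h | h
      · rcases mem_union.mp h with h' | h'
        · rcases mem_union.mp h' with h'' | h''
          · exact (mem_sdiff.mp (mem_sdiff.mp hu).1).2 h''
          · exact (mem_sdiff.mp hu).2 h''
        · exact (disjoint_left.mp hPQd) (hOPP h') (hOQQ hu)
      · exact (disjoint_left.mp hKQd) (hOKK h) (hOQQ hu)
    have d4 : Disjoint (A ∪ B ∪ OP ∪ OK ∪ OQ) ({x} : Finset V) := by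
      rw [disjoint_right]
      intro u hu huu
      rw [mem_singleton] at hu
      subst hu
      rcases mem_union.mp huu with h | h
      · rcases mem_union.mp h with h' | h'
        · rcases mem_union.mp h' with h'' | h''
          · rcases mem_union.mp h'' with h3 | h3
            · exact hxA h3
            · exact hxB h3
          · exact hxP (hOPP h'')
        · exact hxK (hOKK h')
      · exact hxQ (hOQQ h)
    have hcard : (A ∪ B ∪ OP ∪ OK ∪ OQ ∪ {x}).card ≤ Fintype.card V := by
      rw [← card_univ]
      exact card_le_card (subset_univ _)
    rw [card_union_of_disjoint d4, card_union_of_disjoint d3, card_union_of_disjoint d2,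
      card_union_of_disjoint d1, card_union_of_disjoint hABd, card_singleton] at hcard
    omega
  -- density inequalities
  have hI1 : AP.Nonempty → 2 * d + 1 ≤ AP.card + 2 * OP.card := by
    intro hne
    refine olemma_density E hG AP d OP.card ?_ hne
    intro a ha
    have haA : a ∈ A := (mem_inter.mp ha).1
    have haD1 : a ∈ D1 := (mem_sdiff.mp (mem_inter.mp ha).2).1
    have haW : a ∉ W := (mem_sdiff.mp (mem_inter.mp ha).2).2
    have hsub : univ.filter (fun y => E a y) ⊆ AP.filter (fun b => E a b) ∪ OP := by
      intro u hu
      have hEau : E a u := (mem_filter.mp hu).2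
      have huD1 : u ∈ D1 := (hmemD1 u).mpr ⟨a, haA, hEau⟩
      have huW : u ∉ W := fun h => hKey a haD1 u h hEau
      have huB : u ∉ B := fun h => hnotW a haW u h hEau
      have huP : u ∈ P := mem_sdiff.mpr ⟨huD1, huW⟩
      by_cases huA : u ∈ A
      · exact mem_union_left _ (mem_filter.mpr ⟨mem_inter.mpr ⟨huA, huP⟩, hEau⟩)
      · exact mem_union_right _ (mem_sdiff.mpr ⟨mem_sdiff.mpr ⟨huP, huA⟩, huB⟩)
    calc d ≤ (univ.filter (fun y => E a y)).card := degOut a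
    _ ≤ (AP.filter (fun b => E a b) ∪ OP).card := card_le_card hsub
    _ ≤ _ := card_union_le _ _
  have hI2 : BQ.Nonempty → 2 * d + 1 ≤ BQ.card + 2 * OQ.card := by
    intro hne
    refine olemma_density (fun u v => E v u) (fun a b hab hba => hG b a hab hba) BQ d OQ.card ?_ hne
    intro s hs
    have hsB : s ∈ B := (mem_inter.mp hs).1
    have hsW : s ∈ W := (mem_sdiff.mp (mem_inter.mp hs).2).1
    have hsD1 : s ∉ D1 := (mem_sdiff.mp (mem_inter.mp hs).2).2
    have hsub : univ.filter (fun y => E y s) ⊆ BQ.filter (fun b => E b s) ∪ OQ := by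
      intro u hu
      have hEus : E u s := (mem_filter.mp hu).2
      have huW : u ∈ W := (hmemW u).mpr ⟨s, hsB, hEus⟩
      have huD1 : u ∉ D1 := fun h => hKey u h s hsW hEus
      have huA : u ∉ A := fun h => hnotD1 s hsD1 u h hEus
      have huQ : u ∈ Q := mem_sdiff.mpr ⟨huW, huD1⟩
      by_cases huB : u ∈ B
      · exact mem_union_left _ (mem_filter.mpr ⟨mem_inter.mpr ⟨huB, huQ⟩, hEus⟩)
      · exact mem_union_right _ (mem_sdiff.mpr ⟨mem_sdiff.mpr ⟨huQ, huA⟩, huB⟩)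
    calc d ≤ (univ.filter (fun y => E y s)).card := degIn s
    _ ≤ (BQ.filter (fun b => E b s) ∪ OQ).card := card_le_card hsub
    _ ≤ _ := card_union_le _ _
  have hI3 : ∀ a ∈ A, a ∈ D1 → ¬ AP.Nonempty → d ≤ BP.card + OP.card := by
    intro a haA haD1 hAPe
    have hsub : univ.filter (fun y => E a y) ⊆ BP ∪ OP := by
      intro u hu
      have hEau : E a u := (mem_filter.mp hu).2
      have huD1 : u ∈ D1 := (hmemD1 u).mpr ⟨a, haA, hEau⟩
      have huW : u ∉ W := fun h => hKey a haD1 u h hEau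
      have huP : u ∈ P := mem_sdiff.mpr ⟨huD1, huW⟩
      by_cases huA : u ∈ A
      · exact absurd ⟨u, mem_inter.mpr ⟨huA, huP⟩⟩ hAPe
      · by_cases huB : u ∈ B
        · exact mem_union_left _ (mem_inter.mpr ⟨huB, huP⟩)
        · exact mem_union_right _ (mem_sdiff.mpr ⟨mem_sdiff.mpr ⟨huP, huA⟩, huB⟩)
    calc d ≤ (univ.filter (fun y => E a y)).card := degOut a
    _ ≤ (BP ∪ OP).card := card_le_card hsub
    _ ≤ _ := card_union_le _ _
  have hI4 : ∀ s ∈ B, s ∈ W → ¬ BQ.Nonempty → d ≤ AQ.card + OQ.card := by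
    intro s hsB hsW hBQe
    have hsub : univ.filter (fun y => E y s) ⊆ AQ ∪ OQ := by
      intro u hu
      have hEus : E u s := (mem_filter.mp hu).2
      have huW : u ∈ W := (hmemW u).mpr ⟨s, hsB, hEus⟩
      have huD1 : u ∉ D1 := fun h => hKey u h s hsW hEus
      have huQ : u ∈ Q := mem_sdiff.mpr ⟨huW, huD1⟩
      by_cases huB : u ∈ B
      · exact absurd ⟨u, mem_inter.mpr ⟨huB, huQ⟩⟩ hBQe
      · by_cases huA : u ∈ A
        · exact mem_union_left _ (mem_inter.mpr ⟨huA, huQ⟩)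
        · exact mem_union_right _ (mem_sdiff.mpr ⟨mem_sdiff.mpr ⟨huQ, huA⟩, huB⟩)
    calc d ≤ (univ.filter (fun y => E y s)).card := degIn s
    _ ≤ (AQ ∪ OQ).card := card_le_card hsub
    _ ≤ _ := card_union_le _ _
  have hI5 : ∀ a ∈ A, a ∉ D1 → a ∉ W → ¬ AP.Nonempty →
      d ≤ AK.card + OP.card + OK.card := by
    intro a haA haD1 haW hAPe
    have hsub : univ.filter (fun y => E a y) ⊆ AK ∪ OP ∪ OK := by
      intro u hu
      have hEau : E a u := (mem_filter.mp hu).2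
      have huD1 : u ∈ D1 := (hmemD1 u).mpr ⟨a, haA, hEau⟩
      have huB : u ∉ B := fun h => hnotW a haW u h hEau
      by_cases huW : u ∈ W
      · have huK : u ∈ K := mem_inter.mpr ⟨huD1, huW⟩
        by_cases huA : u ∈ A
        · exact mem_union_left _ (mem_union_left _ (mem_inter.mpr ⟨huA, huK⟩))
        · exact mem_union_right _ (mem_sdiff.mpr ⟨mem_sdiff.mpr ⟨huK, huA⟩, huB⟩)
      · have huP : u ∈ P := mem_sdiff.mpr ⟨huD1, huW⟩
        by_cases huA : u ∈ A
        · exact absurd ⟨u, mem_inter.mpr ⟨huA, huP⟩⟩ hAPe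
        · exact mem_union_left _ (mem_union_right _
            (mem_sdiff.mpr ⟨mem_sdiff.mpr ⟨huP, huA⟩, huB⟩))
    calc d ≤ (univ.filter (fun y => E a y)).card := degOut a
    _ ≤ (AK ∪ OP ∪ OK).card := card_le_card hsub
    _ ≤ (AK ∪ OP).card + OK.card := card_union_le _ _
    _ ≤ AK.card + OP.card + OK.card := by
        have := card_union_le AK OP
        omega
  have hI6 : ∀ s ∈ B, s ∉ W → s ∉ D1 → ¬ BQ.Nonempty →
      d ≤ BK.card + OQ.card + OK.card := by
    intro s hsB hsW hsD1 hBQe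
    have hsub : univ.filter (fun y => E y s) ⊆ BK ∪ OQ ∪ OK := by
      intro u hu
      have hEus : E u s := (mem_filter.mp hu).2
      have huW : u ∈ W := (hmemW u).mpr ⟨s, hsB, hEus⟩
      have huA : u ∉ A := fun h => hnotD1 s hsD1 u h hEus
      by_cases huD1 : u ∈ D1
      · have huK : u ∈ K := mem_inter.mpr ⟨huD1, huW⟩
        by_cases huB : u ∈ B
        · exact mem_union_left _ (mem_union_left _ (mem_inter.mpr ⟨huB, huK⟩))
        · exact mem_union_right _ (mem_sdiff.mpr ⟨mem_sdiff.mpr ⟨huK, huA⟩, huB⟩)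
      · have huQ : u ∈ Q := mem_sdiff.mpr ⟨huW, huD1⟩
        by_cases huB : u ∈ B
        · exact absurd ⟨u, mem_inter.mpr ⟨huB, huQ⟩⟩ hBQe
        · exact mem_union_left _ (mem_union_right _
            (mem_sdiff.mpr ⟨mem_sdiff.mpr ⟨huQ, huA⟩, huB⟩))
    calc d ≤ (univ.filter (fun y => E y s)).card := degIn s
    _ ≤ (BK ∪ OQ ∪ OK).card := card_le_card hsub
    _ ≤ (BK ∪ OQ).card + OK.card := card_union_le _ _
    _ ≤ BK.card + OQ.card + OK.card := by
        have := card_union_le BK OQ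
        omega
  have hI7 : P.Nonempty → ¬ AP.Nonempty → ∃ a ∈ A, a ∉ D1 ∧ a ∉ W := by
    rintro ⟨v, hv⟩ hAPe
    obtain ⟨u, hEvu, huAB⟩ := hengOut v
    have hvD1 : v ∈ D1 := (mem_sdiff.mp hv).1
    have hvW : v ∉ W := (mem_sdiff.mp hv).2
    have huW : u ∉ W := fun h => hKey v hvD1 u h hEvu
    rcases huAB with huA | huB
    · have huD1 : u ∉ D1 := by
        intro h
        exact hAPe ⟨u, mem_inter.mpr ⟨huA, mem_sdiff.mpr ⟨h, huW⟩⟩⟩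
      exact ⟨u, huA, huD1, huW⟩
    · exact absurd ((hmemW v).mpr ⟨u, huB, hEvu⟩) hvW
  have hI8 : Q.Nonempty → ¬ BQ.Nonempty → ∃ s ∈ B, s ∉ W ∧ s ∉ D1 := by
    rintro ⟨w, hw⟩ hBQe
    obtain ⟨t, hEtw, htAB⟩ := hengIn w
    have hwW : w ∈ W := (mem_sdiff.mp hw).1
    have hwD1 : w ∉ D1 := (mem_sdiff.mp hw).2
    have htD1 : t ∉ D1 := fun h => hKey t h w hwW hEtw
    rcases htAB with htA | htB
    · exact absurd ((hmemD1 w).mpr ⟨t, htA, hEtw⟩) hwD1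
    · have htW : t ∉ W := by
        intro h
        exact hBQe ⟨t, mem_inter.mpr ⟨htB, mem_sdiff.mpr ⟨h, htD1⟩⟩⟩
      exact ⟨t, htB, htW, htD1⟩
  by_cases hA1 : (A ∩ D1).Nonempty
  · by_cases hB1 : (B ∩ W).Nonempty
    · -- main case: both A and B contain an edge
      by_cases hAPne : AP.Nonempty
      · by_cases hBQne : BQ.Nonempty
        · -- case 4a
          have i1 := hI1 hAPne
          have i2 := hI2 hBQne
          have sA : AP.card ≤ A.card := card_le_card inter_subset_left
          have sB : BQ.card ≤ B.card := card_le_card inter_subset_left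
          omega
        · -- case 4b
          obtain ⟨s1, hs1⟩ := hB1
          have i1 := hI1 hAPne
          have i4 : d ≤ AQ.card + OQ.card := by
            have hs1W : s1 ∈ W := (mem_inter.mp hs1).2
            exact hI4 s1 (mem_inter.mp hs1).1 hs1W hBQne
          have sAA : AP.card + AQ.card ≤ A.card :=
            hsum2 A AP AQ (Disjoint.mono inter_subset_right inter_subset_right hPQd)
              inter_subset_left inter_subset_left
          omega
      · by_cases hBQne : BQ.Nonempty
        · -- case 4c
          obtain ⟨a2, ha2⟩ := hA1
          have i3 := hI3 a2 (mem_inter.mp ha2).1 (mem_inter.mp ha2).2 hAPne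
          have i2 := hI2 hBQne
          have sBB : BP.card + BQ.card ≤ B.card :=
            hsum2 B BP BQ (Disjoint.mono inter_subset_right inter_subset_right hPQd)
              inter_subset_left inter_subset_left
          omega
        · -- case 4d
          obtain ⟨a2, ha2⟩ := hA1
          obtain ⟨s1, hs1⟩ := hB1
          have i3 := hI3 a2 (mem_inter.mp ha2).1 (mem_inter.mp ha2).2 hAPne
          have i4 := hI4 s1 (mem_inter.mp hs1).1 (mem_inter.mp hs1).2 hBQne
          have hPne : P.Nonempty := by
            rcases (by omega : 0 < BP.card ∨ 0 < OP.card) with h | h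
            · obtain ⟨u, hu⟩ := card_pos.mp h
              exact ⟨u, (mem_inter.mp hu).2⟩
            · obtain ⟨u, hu⟩ := card_pos.mp h
              exact ⟨u, hOPP hu⟩
          have hQne : Q.Nonempty := by
            rcases (by omega : 0 < AQ.card ∨ 0 < OQ.card) with h | h
            · obtain ⟨u, hu⟩ := card_pos.mp h
              exact ⟨u, (mem_inter.mp hu).2⟩
            · obtain ⟨u, hu⟩ := card_pos.mp h
              exact ⟨u, hOQQ hu⟩
          obtain ⟨a3, ha3A, ha3D1, ha3W⟩ := hI7 hPne hAPne
          obtain ⟨s3, hs3B, hs3W, hs3D1⟩ := hI8 hQne hBQne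
          have i5 := hI5 a3 ha3A ha3D1 ha3W hAPne
          have i6 := hI6 s3 hs3B hs3W hs3D1 hBQne
          have sAA : AK.card + AQ.card ≤ A.card :=
            hsum2 A AK AQ (Disjoint.mono inter_subset_right inter_subset_right hKQd)
              inter_subset_left inter_subset_left
          have sBB : BP.card + BK.card ≤ B.card :=
            hsum2 B BP BK (Disjoint.mono inter_subset_right inter_subset_right hPKd)
              inter_subset_left inter_subset_left
          omega
    · -- case 3 : A has an edge, B independent
      have hD1W : D1 ⊆ W := by
        intro v hv
        by_contra hvW
        refine htri B W (univ.filter (fun y => E v y)) hBcard hWcard (degOut v) ?_ ?_ ?_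
        · exact disjoint_iff_inter_eq_empty.mpr (not_nonempty_iff_eq_empty.mp hB1)
        · rw [disjoint_right]
          intro u hu huB
          exact hvW ((hmemW v).mpr ⟨u, huB, (mem_filter.mp hu).2⟩)
        · rw [disjoint_right]
          intro u hu huW
          exact hKey v hv u huW (mem_filter.mp hu).2
      obtain ⟨a2, ha2⟩ := hA1
      obtain ⟨u, hu⟩ := card_pos.mp (lt_of_lt_of_le zero_lt_one (le_trans hd1 (degOut a2)))
      have huD1 : u ∈ D1 := (hmemD1 u).mpr ⟨a2, (mem_inter.mp ha2).1, (mem_filter.mp hu).2⟩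
      exact hKey a2 (mem_inter.mp ha2).2 u (hD1W huD1) (mem_filter.mp hu).2
  · by_cases hB1 : (B ∩ W).Nonempty
    · -- case 2 : B has an edge, A independent
      have hWD1 : W ⊆ D1 := by
        intro w hw
        by_contra hwD
        refine htri A D1 (univ.filter (fun y => E y w)) hAcard hD1card (degIn w) ?_ ?_ ?_
        · exact disjoint_iff_inter_eq_empty.mpr (not_nonempty_iff_eq_empty.mp hA1)
        · rw [disjoint_right]
          intro u hu huA
          exact hwD ((hmemD1 w).mpr ⟨u, huA, (mem_filter.mp hu).2⟩)
        · rw [disjoint_right]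
          intro u hu huD1
          exact hKey u huD1 w hw (mem_filter.mp hu).2
      obtain ⟨s1, hs1⟩ := hB1
      obtain ⟨u, hu⟩ := card_pos.mp (lt_of_lt_of_le zero_lt_one (le_trans hd1 (degIn s1)))
      have huW : u ∈ W := (hmemW u).mpr ⟨s1, (mem_inter.mp hs1).1, (mem_filter.mp hu).2⟩
      exact hKey u (hWD1 huW) s1 (mem_inter.mp hs1).2 (mem_filter.mp hu).2
    · -- case 1 : both independent, constructive
      set O0 : Finset V := univ \ insert x (A ∪ B) with hO0
      have e1c : (insert x (A ∪ B)).card = 1 + A.card + B.card := by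
        rw [card_insert_of_notMem (by simp [hxA, hxB]), card_union_of_disjoint hABd]
        ring
      have e2c : O0.card + (insert x (A ∪ B)).card = Fintype.card V := by
        rw [hO0, Finset.card_sdiff_add_card_eq_card (subset_univ _), card_univ]
      have hO0mem : ∀ u, u ≠ x → u ∉ A → u ∉ B → u ∈ O0 := by
        intro u h1 h2 h3
        rw [hO0, mem_sdiff]
        simp [h1, h2, h3]
      obtain ⟨e1, he1⟩ := hBne
      -- out-neighbours of e1
      have hsub1 : univ.filter (fun y => E e1 y) ⊆
          insert x ((univ.filter (fun y => E e1 y)) ∩ A ∪ O0) := by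
        intro u hu
        have hEe1u : E e1 u := (mem_filter.mp hu).2
        by_cases hux : u = x
        · simp [hux]
        · by_cases huA : u ∈ A
          · exact mem_insert_of_mem (mem_union_left _ (mem_inter.mpr ⟨hu, huA⟩))
          · have huB : u ∉ B := fun h =>
              hB1 ⟨e1, mem_inter.mpr ⟨he1, (hmemW e1).mpr ⟨u, h, hEe1u⟩⟩⟩
            exact mem_insert_of_mem (mem_union_right _ (hO0mem u hux huA huB))
      have hcard1 : d ≤ 1 + ((univ.filter (fun y => E e1 y)) ∩ A).card + O0.card := by
        have h1 := le_trans (degOut e1) (card_le_card hsub1)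
        have h2 := card_insert_le x ((univ.filter (fun y => E e1 y)) ∩ A ∪ O0)
        have h3 := card_union_le ((univ.filter (fun y => E e1 y)) ∩ A) O0
        omega
      have hane : 0 < ((univ.filter (fun y => E e1 y)) ∩ A).card := by omega
      obtain ⟨a2, ha2⟩ := card_pos.mp hane
      have ha2A : a2 ∈ A := (mem_inter.mp ha2).2
      have hEe1a2 : E e1 a2 := (mem_filter.mp (mem_inter.mp ha2).1).2
      -- out-neighbours of a2
      have hsub2 : univ.filter (fun y => E a2 y) ⊆ (univ.filter (fun y => E a2 y)) ∩ B ∪ O0 := by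
        intro u hu
        have hEa2u : E a2 u := (mem_filter.mp hu).2
        have hux : u ≠ x := by
          intro h
          exact hG x a2 ((hmemA a2).mp ha2A) (h ▸ hEa2u)
        have huA : u ∉ A := by
          intro h
          exact hA1 ⟨u, mem_inter.mpr ⟨h, (hmemD1 u).mpr ⟨a2, ha2A, hEa2u⟩⟩⟩
        by_cases huB : u ∈ B
        · exact mem_union_left _ (mem_inter.mpr ⟨hu, huB⟩)
        · exact mem_union_right _ (hO0mem u hux huA huB)
      have hcard2 : d ≤ ((univ.filter (fun y => E a2 y)) ∩ B).card + O0.card := by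
        have h1 := le_trans (degOut a2) (card_le_card hsub2)
        have h2 := card_union_le ((univ.filter (fun y => E a2 y)) ∩ B) O0
        omega
      have hbne : 1 < ((univ.filter (fun y => E a2 y)) ∩ B).card := by omega
      obtain ⟨e2, he2m, he2ne⟩ := exists_mem_ne hbne e1
      have he2B : e2 ∈ B := (mem_inter.mp he2m).2
      have hEa2e2 : E a2 e2 := (mem_filter.mp (mem_inter.mp he2m).1).2
      -- in-neighbours of e1
      have hsub3 : univ.filter (fun y => E y e1) ⊆ (univ.filter (fun y => E y e1)) ∩ A ∪ O0 := by
        intro u hu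
        have hEue1 : E u e1 := (mem_filter.mp hu).2
        have hux : u ≠ x := by
          intro h
          exact hG e1 x ((hmemB e1).mp he1) (h ▸ hEue1)
        have huB : u ∉ B := by
          intro h
          exact hB1 ⟨u, mem_inter.mpr ⟨h, (hmemW u).mpr ⟨e1, he1, hEue1⟩⟩⟩
        by_cases huA : u ∈ A
        · exact mem_union_left _ (mem_inter.mpr ⟨hu, huA⟩)
        · exact mem_union_right _ (hO0mem u hux huA huB)
      have hcard3 : d ≤ ((univ.filter (fun y => E y e1)) ∩ A).card + O0.card := by
        have h1 := le_trans (degIn e1) (card_le_card hsub3)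
        have h2 := card_union_le ((univ.filter (fun y => E y e1)) ∩ A) O0
        omega
      have hane3 : 1 < ((univ.filter (fun y => E y e1)) ∩ A).card := by omega
      obtain ⟨a1, ha1m, ha1ne⟩ := exists_mem_ne hane3 a2
      have ha1A : a1 ∈ A := (mem_inter.mp ha1m).2
      have hEa1e1 : E a1 e1 := (mem_filter.mp (mem_inter.mp ha1m).1).2
      exact h3w a1 ha1A e2 he2B e1 a2 hEa1e1 hEe1a2 hEa2e2
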